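/- Let M be a matroid on [n], α ∈ [0,1], and D_A an α-uncontentious distribution for M. Sample A ∼ D_A and an independent uniformly random permutation σ of [n]. Then there exists i ∈ [n] with Pr[i ∈ A] > 0 such that Pr[i ∉ span_M(A ∩ prefix(σ, i)) | i ∈ A] ≥ α, where prefix(σ, i) is the set of elements preceding i in σ. -/
import Mathlib


/-- A matroid on ground set `Fin n`, given as the finite family of independent sets. -/
def IsMatroid {n : ℕ} (M : Finset (Finset (Fin n))) : Prop :=
  ∅ ∈ M ∧ (∀ X ∈ M, ∀ Y ⊆ X, Y ∈ M) ∧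
    ∀ X ∈ M, ∀ Y ∈ M, Y.card < X.card → ∃ i ∈ X \ Y, insert i Y ∈ M

/-- The rank of `X`: the maximum cardinality of an independent subset of `X`. -/
def mrank {n : ℕ} (M : Finset (Finset (Fin n))) (X : Finset (Fin n)) : ℕ :=
  (X.powerset.filter (· ∈ M)).sup Finset.card

/-- The span of `X`: all elements whose insertion does not increase the rank. -/
def spanM {n : ℕ} (M : Finset (Finset (Fin n))) (X : Finset (Fin n)) : Finset (Fin n) :=
  Finset.univ.filter fun i => mrank M (insert i X) = mrank M X

/-- A (finitely supported) probability distribution on subsets of `Fin n`. -/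
def IsDist {n : ℕ} (D : Finset (Fin n) → ℝ) : Prop :=
  (∀ A, 0 ≤ D A) ∧ ∑ A : Finset (Fin n), D A = 1

/-- `Pr_{A ∼ D}[i ∈ A]`. -/
noncomputable def prElem {n : ℕ} (D : Finset (Fin n) → ℝ) (i : Fin n) : ℝ :=
  ∑ A : Finset (Fin n), if i ∈ A then D A else 0

/-- A contention resolution scheme: a distribution over maps `φ` with `φ A ⊆ A` and `φ A ∈ M`. -/
def IsCRS {n : ℕ} (M : Finset (Finset (Fin n)))
    (C : (Finset (Fin n) → Finset (Fin n)) → ℝ) : Prop :=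
  (∀ φ, 0 ≤ C φ) ∧ (∑ φ : Finset (Fin n) → Finset (Fin n), C φ) = 1 ∧
    ∀ φ, C φ ≠ 0 → ∀ A, φ A ⊆ A ∧ φ A ∈ M

/-- `Pr_{A ∼ D, φ ∼ C}[i ∈ φ(A) ∧ i ∈ A]`. -/
noncomputable def selProb {n : ℕ} (D : Finset (Fin n) → ℝ)
    (C : (Finset (Fin n) → Finset (Fin n)) → ℝ) (i : Fin n) : ℝ :=
  ∑ A : Finset (Fin n), ∑ φ : Finset (Fin n) → Finset (Fin n),
    if i ∈ φ A ∧ i ∈ A then D A * C φ else 0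

/-- `D` is `α`-uncontentious for `M`: there is an `α`-balanced CRS, i.e. one with
`Pr[i ∈ φ(A) | i ∈ A] ≥ α` for every `i` with `Pr[i ∈ A] > 0`. -/
def Uncontentious {n : ℕ} (α : ℝ) (M : Finset (Finset (Fin n)))
    (D : Finset (Fin n) → ℝ) : Prop :=
  ∃ C, IsCRS M C ∧ ∀ i : Fin n, 0 < prElem D i → α ≤ selProb D C i / prElem D i

/-- The set of elements arriving strictly before `e` in the arrival order `σ`
(where `σ j` is the `j`-th arriving element). -/
def prefixSet {m : ℕ} (σ : Equiv.Perm (Fin m)) (e : Fin m) : Finset (Fin m) :=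
  Finset.univ.filter fun x => σ.symm x < σ.symm e

lemma mrank_mono {n : ℕ} (M : Finset (Finset (Fin n))) {X Y : Finset (Fin n)} (h : X ⊆ Y) :
    mrank M X ≤ mrank M Y := by
  apply Finset.sup_le
  intro B hB
  simp only [Finset.mem_filter, Finset.mem_powerset] at hB
  exact Finset.le_sup (f := Finset.card)
    (Finset.mem_filter.mpr ⟨Finset.mem_powerset.mpr (hB.1.trans h), hB.2⟩)

lemma card_le_mrank {n : ℕ} (M : Finset (Finset (Fin n))) {B X : Finset (Fin n)}
    (hB : B ∈ M) (hBX : B ⊆ X) : B.card ≤ mrank M X :=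
  Finset.le_sup (f := Finset.card) (Finset.mem_filter.mpr ⟨Finset.mem_powerset.mpr hBX, hB⟩)

lemma mrank_insert_le {n : ℕ} (M : Finset (Finset (Fin n))) (hM : IsMatroid M)
    (i : Fin n) (X : Finset (Fin n)) : mrank M (insert i X) ≤ mrank M X + 1 := by
  apply Finset.sup_le
  intro B hB
  simp only [Finset.mem_filter, Finset.mem_powerset] at hB
  by_cases hiB : i ∈ B
  · have h1 : B.erase i ∈ M := hM.2.1 B hB.2 _ (Finset.erase_subset _ _)
    have h2 : B.erase i ⊆ X := by
      intro x hx
      rcases Finset.mem_erase.mp hx with ⟨hxi, hxB⟩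
      rcases Finset.mem_insert.mp (hB.1 hxB) with h | h
      · exact absurd h hxi
      · exact h
    have h3 : (B.erase i).card ≤ mrank M X := card_le_mrank M h1 h2
    have h4 : (B.erase i).card = B.card - 1 := Finset.card_erase_of_mem hiB
    have h5 : 1 ≤ B.card := Finset.card_pos.mpr ⟨i, hiB⟩
    omega
  · have h2 : B ⊆ X := by
      intro x hxB
      rcases Finset.mem_insert.mp (hB.1 hxB) with h | h
      · exact absurd (h ▸ hxB) hiB
      · exact h
    exact le_trans (card_le_mrank M hB.2 h2) (Nat.le_succ _)

lemma mrank_empty {n : ℕ} (M : Finset (Finset (Fin n))) : mrank M ∅ = 0 := by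
  refine Nat.le_zero.mp (Finset.sup_le fun B hB => ?_)
  simp only [Finset.mem_filter, Finset.mem_powerset, Finset.subset_empty] at hB
  simp [hB.1]

lemma greedy_count {n : ℕ} (M : Finset (Finset (Fin n))) (hM : IsMatroid M)
    (σ : Equiv.Perm (Fin n)) (A : Finset (Fin n)) :
    (A.filter (fun i => i ∉ spanM M (A ∩ prefixSet σ i))).card = mrank M A := by
  classical
  have key : ∀ t : ℕ,
      ((A.filter (fun x => (σ.symm x : ℕ) < t)).filter
        (fun i => i ∉ spanM M (A ∩ prefixSet σ i))).card
      = mrank M (A.filter (fun x => (σ.symm x : ℕ) < t)) := by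
    intro t
    induction t with
    | zero => simp [mrank_empty]
    | succ t ih =>
      by_cases ht : t < n
      · set e := σ ⟨t, ht⟩ with he
        have hsy : σ.symm e = ⟨t, ht⟩ := by simp [he]
        set Q := A.filter (fun x => (σ.symm x : ℕ) < t) with hQdef
        have heQ : e ∉ Q := by
          intro hc
          rw [hQdef, Finset.mem_filter, hsy] at hc
          exact lt_irrefl t hc.2
        have hpre : A ∩ prefixSet σ e = Q := by
          ext x
          simp [prefixSet, hQdef, hsy, Fin.lt_def, Finset.mem_inter, Finset.mem_filter]
        by_cases hA : e ∈ A
        · have hQ1 : A.filter (fun x => (σ.symm x : ℕ) < t + 1) = insert e Q := by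
            ext x
            simp only [Finset.mem_insert, Finset.mem_filter, hQdef]
            constructor
            · rintro ⟨hxA, hlt⟩
              rcases Nat.lt_succ_iff_lt_or_eq.mp hlt with h | h
              · exact Or.inr ⟨hxA, h⟩
              · refine Or.inl ?_
                have hx : σ.symm x = ⟨t, ht⟩ := Fin.ext h
                calc x = σ (σ.symm x) := (σ.apply_symm_apply x).symm
                _ = e := by rw [hx]
            · rintro (rfl | ⟨hxA, h⟩)
              · exact ⟨hA, by simp [hsy]⟩
              · exact ⟨hxA, Nat.lt_succ_of_lt h⟩
          rw [hQ1, Finset.filter_insert]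
          by_cases hPe : e ∉ spanM M (A ∩ prefixSet σ e)
          · have hne : mrank M (insert e Q) ≠ mrank M Q := by
              intro hcontra
              apply hPe
              simp only [spanM, Finset.mem_filter, Finset.mem_univ, true_and, hpre]
              exact hcontra
            have hle : mrank M (insert e Q) ≤ mrank M Q + 1 := mrank_insert_le M hM e Q
            have hge : mrank M Q ≤ mrank M (insert e Q) :=
              mrank_mono M (Finset.subset_insert _ _)
            have heq : mrank M (insert e Q) = mrank M Q + 1 := by omega
            rw [if_pos hPe, heq, Finset.card_insert_of_notMem
              (fun hc => heQ (Finset.filter_subset _ _ hc)), ih]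
          · have heq : mrank M (insert e Q) = mrank M Q := by
              have h := not_not.mp hPe
              simpa [spanM, Finset.mem_filter, hpre] using h
            rw [if_neg hPe, heq, ih]
        · have hQ1 : A.filter (fun x => (σ.symm x : ℕ) < t + 1) = Q := by
            ext x
            simp only [Finset.mem_filter, hQdef]
            constructor
            · rintro ⟨hxA, hlt⟩
              rcases Nat.lt_succ_iff_lt_or_eq.mp hlt with h | h
              · exact ⟨hxA, h⟩
              · exfalso
                have hx : σ.symm x = ⟨t, ht⟩ := Fin.ext h
                have hxe : x = e := by
                  calc x = σ (σ.symm x) := (σ.apply_symm_apply x).symm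
                  _ = e := by rw [hx]
                exact hA (hxe ▸ hxA)
            · rintro ⟨hxA, h⟩
              exact ⟨hxA, Nat.lt_succ_of_lt h⟩
          rw [hQ1, ih]
      · have hQ1 : A.filter (fun x => (σ.symm x : ℕ) < t + 1)
            = A.filter (fun x => (σ.symm x : ℕ) < t) := by
          apply Finset.filter_congr
          intro x _
          have h1 : (σ.symm x : ℕ) < n := (σ.symm x).isLt
          have h2 : n ≤ t := Nat.le_of_not_lt ht
          omega
        rw [hQ1, ih]
  have hAn : A.filter (fun x => (σ.symm x : ℕ) < n) = A := by
    apply Finset.filter_true_of_mem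
    intro x _
    exact (σ.symm x).isLt
  have h := key n
  rwa [hAn] at h

/-- There is an element `i` (active with positive probability) such that, sampling `A ∼ D`
and an independent uniformly random arrival order `σ`,
`Pr[i ∉ span(A ∩ prefix(σ, i)) | i ∈ A] ≥ α`. -/
theorem exists_unspanned_by_prefix {n : ℕ} (hn : 0 < n)
    (M : Finset (Finset (Fin n))) (hM : IsMatroid M)
    (α : ℝ) (hα : α ∈ Set.Icc (0 : ℝ) 1)
    (D : Finset (Fin n) → ℝ) (hD : IsDist D) (hu : Uncontentious α M D)
    (hpos : ∀ i : Fin n, 0 < prElem D i) :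
    ∃ i : Fin n, 0 < prElem D i ∧
      α ≤
        ((∑ σ : Equiv.Perm (Fin n), ∑ A : Finset (Fin n),
            if i ∈ A ∧ i ∉ spanM M (A ∩ prefixSet σ i) then D A else 0) /
          (Nat.factorial n : ℝ)) / prElem D i := by
  classical
  obtain ⟨C, ⟨hC0, hC1, hCprop⟩, hbal⟩ := hu
  set F : Fin n → ℝ := fun i =>
    ∑ σ : Equiv.Perm (Fin n), ∑ A : Finset (Fin n),
      if i ∈ A ∧ i ∉ spanM M (A ∩ prefixSet σ i) then D A else 0 with hF
  -- Step 1: sum of F equals n! * ∑_A mrank * D A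
  have hsumF : ∑ i : Fin n, F i
      = (Nat.factorial n : ℝ) * ∑ A : Finset (Fin n), (mrank M A : ℝ) * D A := by
    have hcomm : ∑ i : Fin n, F i = ∑ σ : Equiv.Perm (Fin n), ∑ A : Finset (Fin n),
        ∑ i : Fin n, if i ∈ A ∧ i ∉ spanM M (A ∩ prefixSet σ i) then D A else 0 := by
      rw [Finset.sum_comm]
      exact Finset.sum_congr rfl fun σ _ => Finset.sum_comm
    rw [hcomm]
    have hstep : ∀ σ : Equiv.Perm (Fin n),
        (∑ A : Finset (Fin n), ∑ i : Fin n,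
          if i ∈ A ∧ i ∉ spanM M (A ∩ prefixSet σ i) then D A else 0)
        = ∑ A : Finset (Fin n), (mrank M A : ℝ) * D A := by
      intro σ
      apply Finset.sum_congr rfl
      intro A _
      rw [← Finset.sum_filter]
      have hfil : Finset.univ.filter (fun i => i ∈ A ∧ i ∉ spanM M (A ∩ prefixSet σ i))
          = A.filter (fun i => i ∉ spanM M (A ∩ prefixSet σ i)) := by
        ext x; simp [Finset.mem_filter]
      rw [hfil, Finset.sum_const, greedy_count M hM σ A, nsmul_eq_mul]
    calc (∑ σ : Equiv.Perm (Fin n), ∑ A : Finset (Fin n), ∑ i : Fin n,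
          if i ∈ A ∧ i ∉ spanM M (A ∩ prefixSet σ i) then D A else 0)
        = ∑ σ : Equiv.Perm (Fin n), ∑ A : Finset (Fin n), (mrank M A : ℝ) * D A :=
          Finset.sum_congr rfl fun σ _ => hstep σ
      _ = (Fintype.card (Equiv.Perm (Fin n)) : ℝ)
            * ∑ A : Finset (Fin n), (mrank M A : ℝ) * D A := by
          rw [Finset.sum_const, nsmul_eq_mul]; rfl
      _ = (Nat.factorial n : ℝ) * ∑ A : Finset (Fin n), (mrank M A : ℝ) * D A := by
          rw [Fintype.card_perm, Fintype.card_fin]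
  -- Step 2: ∑ selProb ≤ ∑_A mrank * D A
  have hsel : ∑ i : Fin n, selProb D C i ≤ ∑ A : Finset (Fin n), (mrank M A : ℝ) * D A := by
    unfold selProb
    rw [Finset.sum_comm]
    apply Finset.sum_le_sum
    intro A _
    rw [Finset.sum_comm]
    have hterm : ∀ φ : Finset (Fin n) → Finset (Fin n),
        (∑ i : Fin n, if i ∈ φ A ∧ i ∈ A then D A * C φ else 0)
        ≤ (mrank M A : ℝ) * D A * C φ := by
      intro φ
      rw [← Finset.sum_filter, Finset.sum_const, nsmul_eq_mul]
      by_cases hφ : C φ = 0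
      · simp [hφ]
      · obtain ⟨hsub, hmem⟩ := hCprop φ hφ A
        have hfil : Finset.univ.filter (fun i => i ∈ φ A ∧ i ∈ A) = φ A := by
          ext x
          simp only [Finset.mem_filter, Finset.mem_univ, true_and, and_iff_left_iff_imp]
          exact fun h => hsub h
        rw [hfil]
        have hcard : (φ A).card ≤ mrank M A := card_le_mrank M hmem hsub
        have h1 : ((φ A).card : ℝ) ≤ (mrank M A : ℝ) := Nat.cast_le.mpr hcard
        have h2 : 0 ≤ D A * C φ := mul_nonneg (hD.1 A) (hC0 φ)
        calc ((φ A).card : ℝ) * (D A * C φ) ≤ (mrank M A : ℝ) * (D A * C φ) :=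
              mul_le_mul_of_nonneg_right h1 h2
          _ = (mrank M A : ℝ) * D A * C φ := by ring
    calc (∑ φ : Finset (Fin n) → Finset (Fin n),
          ∑ i : Fin n, if i ∈ φ A ∧ i ∈ A then D A * C φ else 0)
        ≤ ∑ φ : Finset (Fin n) → Finset (Fin n), (mrank M A : ℝ) * D A * C φ :=
          Finset.sum_le_sum fun φ _ => hterm φ
      _ = (mrank M A : ℝ) * D A * ∑ φ : Finset (Fin n) → Finset (Fin n), C φ := by
          rw [Finset.mul_sum]
      _ = (mrank M A : ℝ) * D A := by rw [hC1, mul_one]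
  -- Step 3: α * prElem ≤ selProb
  have hlb : ∀ i : Fin n, α * prElem D i ≤ selProb D C i := fun i =>
    (le_div_iff₀ (hpos i)).mp (hbal i (hpos i))
  -- Pigeonhole
  by_contra hcon
  push_neg at hcon
  have hfac : (0 : ℝ) < (Nat.factorial n : ℝ) := by
    exact_mod_cast Nat.factorial_pos n
  have hstrict : ∀ i : Fin n, F i / (Nat.factorial n : ℝ) < α * prElem D i := by
    intro i
    have h := hcon i (hpos i)
    exact (div_lt_iff₀ (hpos i)).mp h
  have hne : (Finset.univ : Finset (Fin n)).Nonempty := ⟨⟨0, hn⟩, Finset.mem_univ _⟩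
  have hsum_lt : ∑ i : Fin n, F i / (Nat.factorial n : ℝ)
      < ∑ i : Fin n, α * prElem D i :=
    Finset.sum_lt_sum_of_nonempty hne fun i _ => hstrict i
  have heqdiv : ∑ i : Fin n, F i / (Nat.factorial n : ℝ)
      = ∑ A : Finset (Fin n), (mrank M A : ℝ) * D A := by
    rw [← Finset.sum_div, hsumF, mul_div_cancel_left₀ _ (ne_of_gt hfac)]
  have hchain : ∑ i : Fin n, α * prElem D i ≤ ∑ i : Fin n, F i / (Nat.factorial n : ℝ) := by
    calc ∑ i : Fin n, α * prElem D i ≤ ∑ i : Fin n, selProb D C i :=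
          Finset.sum_le_sum fun i _ => hlb i
      _ ≤ ∑ A : Finset (Fin n), (mrank M A : ℝ) * D A := hsel
      _ = ∑ i : Fin n, F i / (Nat.factorial n : ℝ) := heqdiv.symm
  linarith
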